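/- Let A ∈ S^{n×n} have full row rank, Hermite form H with diagonal D-degrees (h_1,...,h_n), and let (d_1,...,d_n) ∈ N^n. There exist matrices P, G ∈ S^{n×n} with P·A = G, where G is upper triangular with monic diagonal entries, deg_D G_{ii} = d_i, and deg_D G_{ij} < d_j for i < j, if and only if d_i ≥ h_i for all i. -/

import Mathlib

/-- Abstract presentation of a skew (Ore/differential) polynomial ring `S = K[D; δ]`:
`S` is a ring containing `K` via `ι`, with a distinguished element `D` satisfying the
commutation rule `D * a = a * D + δ a`, and every element of `S` is (uniquely) a finite
sum `∑ aₙ Dⁿ`, with coefficients `coeff` supported on `supp`. -/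
structure DiffPolyRing (K : Type) [CommRing K] (S : Type) [Ring S] (δ : K → K) where
  ι : K →+* S
  D : S
  comm_rule : ∀ a : K, D * ι a = ι a * D + ι (δ a)
  coeff : S → ℕ → K
  supp : S → Finset ℕ
  mem_supp : ∀ f n, n ∈ supp f ↔ coeff f n ≠ 0
  coeff_add : ∀ f g n, coeff (f + g) n = coeff f n + coeff g n
  coeff_ext : ∀ f g : S, (∀ n, coeff f n = coeff g n) → f = g
  coeff_monomial : ∀ (a : K) (i n : ℕ), coeff (ι a * D ^ i) n = if n = i then a else 0
  repr_sum : ∀ f : S, f = ∑ n ∈ supp f, ι (coeff f n) * D ^ n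

namespace DiffPolyRing

variable {K S : Type} [CommRing K] [Ring S] {δ : K → K}

/-- Degree in the variable `D`, with `degD 0 = ⊥` (i.e. `-∞`). -/
noncomputable def degD (R : DiffPolyRing K S δ) (f : S) : WithBot ℕ := (R.supp f).max

/-- Degree in `D` as a natural number (`0` for the zero polynomial). -/
noncomputable def natDegD (R : DiffPolyRing K S δ) (f : S) : ℕ := WithBot.unbotD 0 (R.degD f)

/-- `f` is monic: its leading coefficient (in `D`) is `1`. -/
noncomputable def Monic (R : DiffPolyRing K S δ) (f : S) : Prop :=
  R.coeff f (R.natDegD f) = 1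

/-- `H` is in Hermite form: upper triangular, monic diagonal entries, and each
off-diagonal entry has `D`-degree strictly less than the diagonal entry below it. -/
noncomputable def HermiteForm (R : DiffPolyRing K S δ) {n : ℕ}
    (H : Matrix (Fin n) (Fin n) S) : Prop :=
  (∀ i j, j < i → H i j = 0) ∧ (∀ i, R.Monic (H i i)) ∧
    (∀ i j, i < j → R.degD (H i j) < R.degD (H j j))

/-- The rows of `A` are left `S`-linearly independent. -/
def FullRowRank {n : ℕ} (A : Matrix (Fin n) (Fin n) S) : Prop :=
  ∀ c : Fin n → S, (∀ j, (∑ i, c i * A i j) = 0) → c = 0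

end DiffPolyRing

namespace DiffPolyRing

variable {K S : Type} [CommRing K] [Ring S] {δ : K → K} (R : DiffPolyRing K S δ)

lemma coeff0 (n : ℕ) : R.coeff 0 n = 0 := by
  have := R.coeff_add 0 0 n
  simpa using this.symm

lemma coeff_neg (f : S) (n : ℕ) : R.coeff (-f) n = - R.coeff f n := by
  have := R.coeff_add f (-f) n
  simp only [add_neg_cancel, R.coeff0] at this
  linear_combination -this

lemma coeff_sub (f g : S) (n : ℕ) : R.coeff (f - g) n = R.coeff f n - R.coeff g n := by
  rw [sub_eq_add_neg, R.coeff_add, R.coeff_neg]; ring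

lemma coeff_sum {α : Type*} (s : Finset α) (f : α → S) (n : ℕ) :
    R.coeff (∑ i ∈ s, f i) n = ∑ i ∈ s, R.coeff (f i) n := by
  classical
  induction s using Finset.induction with
  | empty => simp [R.coeff0]
  | insert a s hx ih => simp [Finset.sum_insert hx, R.coeff_add, ih]

lemma le_degD_of_coeff_ne {f : S} {m : ℕ} (h : R.coeff f m ≠ 0) :
    (m : WithBot ℕ) ≤ R.degD f :=
  Finset.le_max ((R.mem_supp f m).2 h)

lemma coeff_eq_zero_of_degD_lt {f : S} {m : ℕ} (h : R.degD f < (m : WithBot ℕ)) :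
    R.coeff f m = 0 := by
  by_contra hc
  exact absurd (R.le_degD_of_coeff_ne hc) (not_le.2 h)

lemma degD_le_iff {f : S} {N : ℕ} :
    R.degD f ≤ (N : WithBot ℕ) ↔ ∀ m, N < m → R.coeff f m = 0 := by
  constructor
  · intro hd m hm
    exact R.coeff_eq_zero_of_degD_lt (lt_of_le_of_lt hd (by exact_mod_cast hm))
  · intro hc
    apply Finset.max_le
    intro b hb
    rw [R.mem_supp] at hb
    by_contra hbN
    have : (N:WithBot ℕ) < (b:WithBot ℕ) := not_le.1 hbN
    exact hb (hc b (by exact_mod_cast this))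

lemma degD_lt_iff {f : S} {N : ℕ} :
    R.degD f < (N : WithBot ℕ) ↔ ∀ m, N ≤ m → R.coeff f m = 0 := by
  constructor
  · intro hd m hm
    exact R.coeff_eq_zero_of_degD_lt (lt_of_lt_of_le hd (by exact_mod_cast hm))
  · intro hc
    rcases Nat.eq_zero_or_pos N with h0 | hpos
    · subst h0
      have : R.supp f = ∅ := by
        ext b; simp [R.mem_supp, hc b (Nat.zero_le b)]
      rw [degD, this]
      exact WithBot.bot_lt_coe 0
    · have : R.degD f ≤ ((N-1 : ℕ) : WithBot ℕ) := by
        rw [R.degD_le_iff]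
        intro m hm
        exact hc m (by omega)
      refine lt_of_le_of_lt this ?_
      exact_mod_cast Nat.sub_lt hpos one_pos

lemma degD_eq_coe {f : S} {N : ℕ} (h1 : R.coeff f N ≠ 0)
    (h2 : ∀ m, N < m → R.coeff f m = 0) : R.degD f = (N : WithBot ℕ) :=
  le_antisymm (R.degD_le_iff.2 h2) (R.le_degD_of_coeff_ne h1)

lemma natDegD_eq {f : S} {N : ℕ} (h : R.degD f = (N : WithBot ℕ)) : R.natDegD f = N := by
  rw [natDegD, h]
  rw [show ((N : ℕ) : WithBot ℕ) = WithBot.some N from rfl, WithBot.unbotD_coe]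

lemma eq_zero_of_coeff {f : S} (h : ∀ n, R.coeff f n = 0) : f = 0 :=
  R.coeff_ext f 0 (fun n => by rw [h n, R.coeff0])

lemma ne_zero_of_monic [Nontrivial K] {f : S} (h : R.Monic f) : f ≠ 0 := by
  intro hf
  rw [Monic, hf, R.coeff0] at h
  exact zero_ne_one h

lemma coeff_natDegD_of_monic {f : S} {N : ℕ} (hm : R.Monic f)
    (h : R.degD f = (N : WithBot ℕ)) : R.coeff f N = 1 := by
  rw [← R.natDegD_eq h]; exact hm

lemma degD_eq_natDegD {f : S} (hf : f ≠ 0) :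
    R.degD f = (R.natDegD f : WithBot ℕ) := by
  have hne : R.degD f ≠ ⊥ := by
    intro hb
    apply hf
    apply R.eq_zero_of_coeff
    intro n
    by_contra hc
    have := R.le_degD_of_coeff_ne hc
    rw [hb] at this
    exact absurd this (by simp)
  rcases WithBot.ne_bot_iff_exists.1 hne with ⟨N, hN⟩
  rw [R.natDegD_eq hN.symm]
  exact hN.symm

lemma coeff_natDegD_ne_zero {f : S} (hf : f ≠ 0) :
    R.coeff f (R.natDegD f) ≠ 0 := by
  intro hc
  have h := R.degD_eq_natDegD hf
  have : R.degD f < ((R.natDegD f : ℕ) : WithBot ℕ) := by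
    rw [R.degD_lt_iff]
    intro m hm
    rcases eq_or_lt_of_le hm with rfl | hlt
    · exact hc
    · exact R.coeff_eq_zero_of_degD_lt (by rw [h]; exact_mod_cast hlt)
  rw [h] at this
  exact lt_irrefl _ this

lemma coeff_iota_mul (c : K) (g : S) (m : ℕ) :
    R.coeff (R.ι c * g) m = c * R.coeff g m := by
  conv_lhs => rw [R.repr_sum g]
  rw [Finset.mul_sum]
  have : ∀ k ∈ R.supp g, R.ι c * (R.ι (R.coeff g k) * R.D ^ k)
      = R.ι (c * R.coeff g k) * R.D ^ k := by
    intro k _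
    rw [← mul_assoc, ← map_mul]
  rw [Finset.sum_congr rfl this, R.coeff_sum]
  simp only [R.coeff_monomial]
  rw [Finset.sum_ite_eq (R.supp g) m (fun k => c * R.coeff g k)]
  by_cases hm : m ∈ R.supp g
  · simp [hm]
  · rw [if_neg hm]
    have : R.coeff g m = 0 := by
      by_contra hc
      exact hm ((R.mem_supp g m).2 hc)
    rw [this, mul_zero]

lemma coeff_mul_Dpow (f : S) (j m : ℕ) :
    R.coeff (f * R.D ^ j) m = if j ≤ m then R.coeff f (m - j) else 0 := by
  conv_lhs => rw [R.repr_sum f]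
  rw [Finset.sum_mul]
  have : ∀ k ∈ R.supp f, R.ι (R.coeff f k) * R.D ^ k * R.D ^ j
      = R.ι (R.coeff f k) * R.D ^ (k + j) := by
    intro k _
    rw [mul_assoc, ← pow_add]
  rw [Finset.sum_congr rfl this, R.coeff_sum]
  simp only [R.coeff_monomial]
  by_cases hj : j ≤ m
  · have : ∀ k ∈ R.supp f, (if m = k + j then R.coeff f k else 0)
        = (if m - j = k then R.coeff f k else 0) := by
      intro k _
      congr 1
      simp only [eq_iff_iff]
      omega
    rw [Finset.sum_congr rfl this, if_pos hj,
      Finset.sum_ite_eq (R.supp f) (m - j) (fun k => R.coeff f k)]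
    by_cases hm : m - j ∈ R.supp f
    · simp [hm]
    · rw [if_neg hm]
      by_contra hc
      exact hm ((R.mem_supp f (m-j)).2 (fun h => hc h.symm))
  · rw [if_neg hj]
    apply Finset.sum_eq_zero
    intro k _
    rw [if_neg (by omega)]

lemma D_mul_repr (f : S) : ∃ g : S, R.D * f = f * R.D + g ∧
    ∀ m, R.coeff f m = 0 → R.coeff g m = 0 := by
  refine ⟨∑ k ∈ R.supp f, R.ι (δ (R.coeff f k)) * R.D ^ k, ?_, ?_⟩
  · conv_lhs => rw [R.repr_sum f]
    conv_rhs => enter [1, 1]; rw [R.repr_sum f]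
    rw [Finset.mul_sum, Finset.sum_mul, ← Finset.sum_add_distrib]
    apply Finset.sum_congr rfl
    intro k _
    rw [← mul_assoc, R.comm_rule, add_mul, mul_assoc, mul_assoc, ← pow_succ, ← pow_succ']
  · intro m hm
    rw [R.coeff_sum]
    apply Finset.sum_eq_zero
    intro k hk
    rw [R.coeff_monomial]
    by_cases hmk : m = k
    · subst hmk
      exact absurd hm ((R.mem_supp f m).1 hk)
    · rw [if_neg hmk]

lemma coeff_D_mul {f : S} {b : ℕ} (hf : ∀ m, b < m → R.coeff f m = 0) :
    (∀ m, b + 1 < m → R.coeff (R.D * f) m = 0) ∧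
      R.coeff (R.D * f) (b + 1) = R.coeff f b := by
  obtain ⟨g, hg, hsupp⟩ := R.D_mul_repr f
  have hcoeff : ∀ m, R.coeff (R.D * f) m = R.coeff (f * R.D) m + R.coeff g m := by
    intro m; rw [hg, R.coeff_add]
  have hfD : ∀ m, R.coeff (f * R.D) m = if 1 ≤ m then R.coeff f (m-1) else 0 := by
    intro m; rw [← pow_one R.D, R.coeff_mul_Dpow]
  constructor
  · intro m hm
    rw [hcoeff, hfD, if_pos (by omega), hf (m-1) (by omega),
      hsupp m (hf m (by omega)), add_zero]
  · rw [hcoeff, hfD, if_pos (by omega), hsupp (b+1) (hf (b+1) (by omega)), add_zero]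
    norm_num

lemma coeff_Dpow_mul (i : ℕ) {g : S} {b : ℕ} (hg : ∀ m, b < m → R.coeff g m = 0) :
    (∀ m, i + b < m → R.coeff (R.D ^ i * g) m = 0) ∧
      R.coeff (R.D ^ i * g) (i + b) = R.coeff g b := by
  induction i with
  | zero =>
    constructor
    · intro m hm
      rw [pow_zero, one_mul]
      exact hg m (by omega)
    · rw [pow_zero, one_mul, Nat.zero_add]
  | succ i ih =>
    have h1 : R.D ^ (i+1) * g = R.D * (R.D ^ i * g) := by
      rw [pow_succ', mul_assoc]
    obtain ⟨ih1, ih2⟩ := ih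
    obtain ⟨c1, c2⟩ := R.coeff_D_mul ih1
    constructor
    · intro m hm
      rw [h1]
      exact c1 m (by omega)
    · rw [h1, show i + 1 + b = (i + b) + 1 by omega, c2, ih2]

lemma coeff_mul {f g : S} {a b : ℕ} (hf : ∀ m, a < m → R.coeff f m = 0)
    (hg : ∀ m, b < m → R.coeff g m = 0) :
    (∀ m, a + b < m → R.coeff (f * g) m = 0) ∧
      R.coeff (f * g) (a + b) = R.coeff f a * R.coeff g b := by
  have key : ∀ m, R.coeff (f * g) m
      = ∑ k ∈ R.supp f, R.coeff f k * R.coeff (R.D ^ k * g) m := by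
    intro m
    conv_lhs => rw [R.repr_sum f]
    rw [Finset.sum_mul, R.coeff_sum]
    apply Finset.sum_congr rfl
    intro k _
    rw [mul_assoc, R.coeff_iota_mul]
  have hsupp_le : ∀ k ∈ R.supp f, k ≤ a := by
    intro k hk
    by_contra hc
    exact ((R.mem_supp f k).1 hk) (hf k (by omega))
  constructor
  · intro m hm
    rw [key]
    apply Finset.sum_eq_zero
    intro k hk
    rw [(R.coeff_Dpow_mul k hg).1 m (by have := hsupp_le k hk; omega), mul_zero]
  · rw [key]
    rw [Finset.sum_eq_single a]
    · rw [(R.coeff_Dpow_mul a hg).2]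
    · intro k hk hka
      have hk2 := hsupp_le k hk
      rw [(R.coeff_Dpow_mul k hg).1 (a+b) (by omega), mul_zero]
    · intro ha
      have : R.coeff f a = 0 := by
        by_contra hc
        exact ha ((R.mem_supp f a).2 hc)
      rw [this, zero_mul]

lemma degD_zero : R.degD (0 : S) = ⊥ := by
  rw [degD, Finset.max_eq_bot]
  ext n
  simp [R.mem_supp, R.coeff0]

lemma coeff_high {f : S} (hf : f ≠ 0) :
    ∀ m, R.natDegD f < m → R.coeff f m = 0 := by
  intro m hm
  apply R.coeff_eq_zero_of_degD_lt
  rw [R.degD_eq_natDegD hf]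
  exact_mod_cast hm

lemma degD_mul_eq [NoZeroDivisors K] {f g : S} {a b : ℕ}
    (hfa : R.coeff f a ≠ 0) (hf : ∀ m, a < m → R.coeff f m = 0)
    (hgb : R.coeff g b ≠ 0) (hg : ∀ m, b < m → R.coeff g m = 0) :
    R.degD (f * g) = ((a + b : ℕ) : WithBot ℕ) ∧
      R.coeff (f * g) (a + b) = R.coeff f a * R.coeff g b := by
  obtain ⟨h1, h2⟩ := R.coeff_mul hf hg
  exact ⟨R.degD_eq_coe (by rw [h2]; exact mul_ne_zero hfa hgb) h1, h2⟩

include R in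
lemma mul_right_cancel0 [NoZeroDivisors K] {x y : S} (hy : y ≠ 0) (hxy : x * y = 0) :
    x = 0 := by
  by_contra hx
  obtain ⟨_, h2⟩ := R.coeff_mul (R.coeff_high hx) (R.coeff_high hy)
  rw [hxy, R.coeff0] at h2
  exact mul_ne_zero (R.coeff_natDegD_ne_zero hx) (R.coeff_natDegD_ne_zero hy) h2.symm

lemma coeff_monomial_high (c : K) (i : ℕ) : ∀ m, i < m → R.coeff (R.ι c * R.D ^ i) m = 0 := by
  intro m hm
  rw [R.coeff_monomial, if_neg (by omega)]

lemma div_monic (m : ℕ) {g : S} (hg1 : R.coeff g m = 1)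
    (hg2 : ∀ k, m < k → R.coeff g k = 0) (f : S) :
    ∃ q r : S, f = q * g + r ∧ R.degD r < (m : WithBot ℕ) := by
  suffices H : ∀ N : ℕ, ∀ f : S, R.degD f < (N : WithBot ℕ) →
      ∃ q r : S, f = q * g + r ∧ R.degD r < (m : WithBot ℕ) by
    apply H (R.natDegD f + 1)
    by_cases hf : f = 0
    · rw [hf, R.degD_zero]
      exact WithBot.bot_lt_coe _
    · rw [R.degD_eq_natDegD hf]
      exact_mod_cast lt_add_one _
  intro N
  induction N with
  | zero =>
    intro f hf
    refine ⟨0, f, by rw [zero_mul, zero_add], lt_of_lt_of_le hf ?_⟩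
    exact_mod_cast Nat.zero_le m
  | succ N ih =>
    intro f hf
    by_cases hfm : R.degD f < (m : WithBot ℕ)
    · exact ⟨0, f, by rw [zero_mul, zero_add], hfm⟩
    · have hf0 : f ≠ 0 := by
        intro h0
        rw [h0, R.degD_zero] at hfm
        exact hfm (WithBot.bot_lt_coe _)
      set N' := R.natDegD f with hN'def
      have hdeg : R.degD f = (N' : WithBot ℕ) := R.degD_eq_natDegD hf0
      have hmN' : m ≤ N' := by
        have := not_lt.1 hfm
        rw [hdeg] at this
        exact_mod_cast this
      have hN'N : N' ≤ N := by
        rw [hdeg] at hf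
        have : N' < N + 1 := by exact_mod_cast hf
        omega
      set c := R.coeff f N' with hcdef
      set t := R.ι c * R.D ^ (N' - m) with htdef
      obtain ⟨p1, p2⟩ := R.coeff_mul (R.coeff_monomial_high c (N' - m)) hg2
      have hNm : N' - m + m = N' := by omega
      rw [hNm] at p1 p2
      rw [R.coeff_monomial, if_pos rfl, hg1, mul_one] at p2
      set f' := f - t * g with hf'def
      have hf'deg : R.degD f' < (N' : WithBot ℕ) := by
        rw [R.degD_lt_iff]
        intro k hk
        rcases eq_or_lt_of_le hk with rfl | hlt
        · rw [R.coeff_sub, p2, sub_self]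
        · rw [R.coeff_sub, R.coeff_high hf0 k hlt, p1 k hlt, sub_self]
      obtain ⟨q', r', hq', hr'⟩ := ih f' (lt_of_lt_of_le hf'deg (by exact_mod_cast hN'N))
      refine ⟨q' + t, r', ?_, hr'⟩
      have hfeq : f = f' + t * g := by rw [hf'def, sub_add_cancel]
      rw [hfeq, hq', add_mul, add_right_comm]

section Matrices

variable [Nontrivial K] [NoZeroDivisors K]

lemma solvability_mp {n : ℕ} (H G Q : Matrix (Fin n) (Fin n) S) (h dv : Fin n → ℕ)
    (hHtri : ∀ i j, j < i → H i j = 0) (hHmon : ∀ i, R.Monic (H i i))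
    (hdiagH : ∀ i, R.degD (H i i) = (h i : WithBot ℕ))
    (hQH : Q * H = G)
    (hGtri : ∀ i j, j < i → G i j = 0)
    (hGdiag : ∀ i, R.Monic (G i i) ∧ R.degD (G i i) = (dv i : WithBot ℕ)) :
    ∀ i, h i ≤ dv i := by
  have hHne : ∀ i, H i i ≠ 0 := fun i => R.ne_zero_of_monic (hHmon i)
  have Qlow : ∀ (m : ℕ) (j : Fin n), (j : ℕ) = m → ∀ i, j < i → Q i j = 0 := by
    intro m
    induction m using Nat.strong_induction_on with
    | _ m IH =>
      intro j hjm i hij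
      have hGij : ∑ k, Q i k * H k j = G i j := by
        rw [← hQH, Matrix.mul_apply]
      rw [hGtri i j hij] at hGij
      have hsum : ∑ k, Q i k * H k j = Q i j * H j j := by
        apply Finset.sum_eq_single j
        · intro k _ hkj
          rcases lt_or_gt_of_ne hkj with hk | hk
          · rw [IH (k : ℕ) (by omega) k rfl i (lt_trans hk hij), zero_mul]
          · rw [hHtri k j hk, mul_zero]
        · intro hj; exact absurd (Finset.mem_univ j) hj
      rw [hsum] at hGij
      exact R.mul_right_cancel0 (hHne j) hGij
  intro i
  have hGii : Q i i * H i i = G i i := by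
    rw [← hQH, Matrix.mul_apply]
    symm
    apply Finset.sum_eq_single i
    · intro k _ hki
      rcases lt_or_gt_of_ne hki with hk | hk
      · rw [Qlow (k : ℕ) k rfl i hk, zero_mul]
      · rw [hHtri k i hk, mul_zero]
    · intro hi; exact absurd (Finset.mem_univ i) hi
  have hGne : G i i ≠ 0 := R.ne_zero_of_monic (hGdiag i).1
  have hQne : Q i i ≠ 0 := by
    intro h0
    rw [h0, zero_mul] at hGii
    exact hGne hGii.symm
  have hHcoeff : R.coeff (H i i) (h i) ≠ 0 := by
    rw [R.coeff_natDegD_of_monic (hHmon i) (hdiagH i)]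
    exact one_ne_zero
  have hHhigh : ∀ m, h i < m → R.coeff (H i i) m = 0 := by
    intro m hm
    exact R.coeff_eq_zero_of_degD_lt (by rw [hdiagH i]; exact_mod_cast hm)
  obtain ⟨hd, _⟩ := R.degD_mul_eq (R.coeff_natDegD_ne_zero hQne)
    (R.coeff_high hQne) hHcoeff hHhigh
  rw [hGii, (hGdiag i).2] at hd
  have : dv i = R.natDegD (Q i i) + h i := by exact_mod_cast hd
  omega

lemma solvability_mpr {n : ℕ} (A U H : Matrix (Fin n) (Fin n) S) (h dv : Fin n → ℕ)
    (hUA : U * A = H)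
    (hHtri : ∀ i j, j < i → H i j = 0) (hHmon : ∀ i, R.Monic (H i i))
    (hdiagH : ∀ i, R.degD (H i i) = (h i : WithBot ℕ))
    (hle : ∀ i, h i ≤ dv i) :
    ∃ P G : Matrix (Fin n) (Fin n) S, P * A = G ∧
      (∀ i j, j < i → G i j = 0) ∧
      (∀ i, R.Monic (G i i) ∧ R.degD (G i i) = (dv i : WithBot ℕ)) ∧
      (∀ i j, i < j → R.degD (G i j) < (dv j : WithBot ℕ)) := by
  classical
  set e : Fin n → ℕ := fun i => dv i - h i with he
  have hdpow : ∀ i : Fin n, (R.coeff (R.D ^ e i) (e i) = 1 ∧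
      ∀ m, e i < m → R.coeff (R.D ^ e i) m = 0) := by
    intro i
    have hD : R.D ^ e i = R.ι 1 * R.D ^ e i := by rw [map_one, one_mul]
    constructor
    · rw [hD, R.coeff_monomial, if_pos rfl]
    · intro m hm
      rw [hD, R.coeff_monomial, if_neg (by omega)]
  -- base matrices
  set G0 : Matrix (Fin n) (Fin n) S := Matrix.of fun i j => R.D ^ e i * H i j with hG0
  set P0 : Matrix (Fin n) (Fin n) S := Matrix.of fun i j => R.D ^ e i * U i j with hP0
  have hP0A : P0 * A = G0 := by
    ext i j
    rw [Matrix.mul_apply]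
    show ∑ k, (R.D ^ e i * U i k) * A k j = R.D ^ e i * H i j
    rw [← hUA, Matrix.mul_apply, Finset.mul_sum]
    apply Finset.sum_congr rfl
    intro k _
    rw [mul_assoc]
  have hG0tri : ∀ i j, j < i → G0 i j = 0 := by
    intro i j hij
    show R.D ^ e i * H i j = 0
    rw [hHtri i j hij, mul_zero]
  have hG0diag : ∀ i, R.coeff (G0 i i) (dv i) = 1 ∧
      R.degD (G0 i i) = (dv i : WithBot ℕ) := by
    intro i
    have hHcoeff : R.coeff (H i i) (h i) = 1 :=
      R.coeff_natDegD_of_monic (hHmon i) (hdiagH i)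
    have hHhigh : ∀ m, h i < m → R.coeff (H i i) m = 0 := fun m hm =>
      R.coeff_eq_zero_of_degD_lt (by rw [hdiagH i]; exact_mod_cast hm)
    obtain ⟨hd, hc⟩ := R.degD_mul_eq (f := R.D ^ e i) (g := H i i)
      (by rw [(hdpow i).1]; exact one_ne_zero) (hdpow i).2
      (by rw [hHcoeff]; exact one_ne_zero) hHhigh
    have hsum : e i + h i = dv i := by
      show dv i - h i + h i = dv i
      have := hle i
      omega
    constructor
    · show R.coeff (R.D ^ e i * H i i) (dv i) = 1
      rw [← hsum, hc, (hdpow i).1, hHcoeff, one_mul]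
    · show R.degD (R.D ^ e i * H i i) = (dv i : WithBot ℕ)
      rw [hd, hsum]
  -- inductive reduction of columns
  have main : ∀ t : ℕ, t ≤ n → ∃ P G : Matrix (Fin n) (Fin n) S, P * A = G ∧
      (∀ i j, j < i → G i j = 0) ∧
      (∀ i, R.coeff (G i i) (dv i) = 1 ∧ R.degD (G i i) = (dv i : WithBot ℕ)) ∧
      (∀ i j : Fin n, i < j → (j : ℕ) < t → R.degD (G i j) < (dv j : WithBot ℕ)) := by
    intro t
    induction t with
    | zero =>
      intro _
      exact ⟨P0, G0, hP0A, hG0tri, hG0diag, fun i j _ hj => absurd hj (by omega)⟩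
    | succ t ih =>
      intro ht
      obtain ⟨P, G, hPA, htri, hdiag, hoff⟩ := ih (by omega)
      set jt : Fin n := ⟨t, by omega⟩ with hjt
      have hdivex : ∀ i : Fin n, ∃ q r : S, G i jt = q * G jt jt + r ∧
          R.degD r < ((dv jt : ℕ) : WithBot ℕ) := by
        intro i
        exact R.div_monic (dv jt) (hdiag jt).1
          (fun k hk => R.coeff_eq_zero_of_degD_lt
            (by rw [(hdiag jt).2]; exact_mod_cast hk)) (G i jt)
      choose q r hqr hr using hdivex
      set G2 : Matrix (Fin n) (Fin n) S :=
        Matrix.of fun i j => if i < jt then G i j - q i * G jt j else G i j with hG2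
      set P2 : Matrix (Fin n) (Fin n) S :=
        Matrix.of fun i j => if i < jt then P i j - q i * P jt j else P i j with hP2
      have hG2app : ∀ i j, G2 i j = if i < jt then G i j - q i * G jt j else G i j :=
        fun i j => rfl
      have hP2A : P2 * A = G2 := by
        ext i j
        rw [Matrix.mul_apply, hG2app]
        by_cases hi : i < jt
        · simp only [hi, if_pos]
          have : ∀ k, P2 i k * A k j = P i k * A k j - q i * (P jt k * A k j) := by
            intro k
            show (if i < jt then P i k - q i * P jt k else P i k) * A k j = _
            rw [if_pos hi, sub_mul, mul_assoc]
          rw [Finset.sum_congr rfl (fun k _ => this k), Finset.sum_sub_distrib,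
            ← Finset.mul_sum, ← Matrix.mul_apply, ← Matrix.mul_apply, hPA]
        · simp only [hi, if_neg, if_false]
          have : ∀ k, P2 i k * A k j = P i k * A k j := by
            intro k
            show (if i < jt then P i k - q i * P jt k else P i k) * A k j = _
            rw [if_neg hi]
          rw [Finset.sum_congr rfl (fun k _ => this k), ← Matrix.mul_apply, hPA]
      refine ⟨P2, G2, hP2A, ?_, ?_, ?_⟩
      · intro i j hij
        rw [hG2app]
        by_cases hi : i < jt
        · rw [if_pos hi, htri i j hij, htri jt j (lt_trans hij hi), mul_zero, sub_zero]
        · rw [if_neg hi]; exact htri i j hij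
      · intro i
        have : G2 i i = G i i := by
          rw [hG2app]
          by_cases hi : i < jt
          · rw [if_pos hi, htri jt i hi, mul_zero, sub_zero]
          · rw [if_neg hi]
        rw [this]
        exact hdiag i
      · intro i j hij hjt1
        rw [hG2app]
        by_cases hjeq : j = jt
        · subst hjeq
          rw [if_pos hij]
          have hx : G i jt - q i * G jt jt = r i := by rw [hqr i, add_sub_cancel_left]
          rw [hx]
          exact hr i
        · have hjlt : (j : ℕ) < t := by
            have hne : (j : ℕ) ≠ t := fun hc => hjeq (Fin.ext hc)
            omega
          have hjltfin : j < jt := Fin.lt_def.mpr hjlt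
          have hGjtj : G jt j = 0 := htri jt j hjltfin
          by_cases hi : i < jt
          · rw [if_pos hi, hGjtj, mul_zero, sub_zero]
            exact hoff i j hij hjlt
          · rw [if_neg hi]
            exact hoff i j hij hjlt
  obtain ⟨P, G, hPA, htri, hdiag, hoff⟩ := main n le_rfl
  refine ⟨P, G, hPA, htri, ?_, fun i j hij => hoff i j hij j.isLt⟩
  intro i
  refine ⟨?_, (hdiag i).2⟩
  rw [Monic, R.natDegD_eq (hdiag i).2]
  exact (hdiag i).1

end Matrices

end DiffPolyRing

/-- solvability criterion. With `H` the Hermite form of `A` having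
diagonal `D`-degrees `h`, there exist `P, G` with `P·A = G`, `G` upper triangular with
monic diagonal entries of degrees exactly `dv i` and off-diagonal degrees `< dv j`,
if and only if `h i ≤ dv i` for all `i`. -/
theorem hermite_degree_solvability
    {F : Type} [Field F] [CharZero F] {S : Type} [Ring S]
    (δ : RatFunc F → RatFunc F)
    (hδadd : ∀ a b : RatFunc F, δ (a + b) = δ a + δ b)
    (hδmul : ∀ a b : RatFunc F, δ (a * b) = a * δ b + δ a * b)
    (R : DiffPolyRing (RatFunc F) S δ) {n : ℕ}
    (A U H : Matrix (Fin n) (Fin n) S) (h dv : Fin n → ℕ)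
    (hA : DiffPolyRing.FullRowRank A)
    (hU : IsUnit U) (hUA : U * A = H) (hH : R.HermiteForm H)
    (hdiag : ∀ i, R.degD (H i i) = (h i : WithBot ℕ)) :
    (∃ P G : Matrix (Fin n) (Fin n) S, P * A = G ∧
        (∀ i j, j < i → G i j = 0) ∧
        (∀ i, R.Monic (G i i) ∧ R.degD (G i i) = (dv i : WithBot ℕ)) ∧
        (∀ i j, i < j → R.degD (G i j) < (dv j : WithBot ℕ))) ↔
      ∀ i, h i ≤ dv i := by
  constructor
  · rintro ⟨P, G, hPA, hGtri, hGdiag, hGoff⟩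
    obtain ⟨u, hu⟩ := hU
    set V : Matrix (Fin n) (Fin n) S := Units.val u⁻¹ with hV
    have hVU : V * U = 1 := by rw [hV, ← hu]; exact u.inv_mul
    have hA' : A = V * H := by rw [← hUA, ← mul_assoc, hVU, one_mul]
    have hQH : (P * V) * H = G := by rw [mul_assoc, ← hA', hPA]
    exact R.solvability_mp H G _ h dv hH.1 hH.2.1 hdiag hQH hGtri hGdiag
  · intro hle
    exact R.solvability_mpr A U H h dv hUA hH.1 hH.2.1 hdiag hle
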